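/- Let F be a field of characteristic different from 2 and A a central simple F-algebra with dim_F(A) = 4. Then A is a quaternion algebra: there exist nonzero elements a, b of F such that A is isomorphic as an F-algebra to the quaternion algebra H_F(a,b) with F-basis (1, α, β, αβ) and relations α² = a, β² = b, αβ = −βα. -/

import Mathlib

open Quaternion

theorem aux_smul_one_eq_zero {F A : Type*} [Field F] [Ring A] [Algebra F A]
    [Nontrivial A] {c : F} (h : c • (1:A) = 0) : c = 0 := by
  rcases smul_eq_zero.mp h with h | h
  · exact h
  · exact absurd h one_ne_zero

theorem aux_span_top (F : Type*) {A : Type*} [Field F] [Ring A] [Algebra F A]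
    [Nontrivial A] [IsSimpleRing A] (s : A) (hs : s ≠ 0) :
    Submodule.span F {x : A | ∃ u v : A, x = u * s * v} = ⊤ := by
  set S : Submodule F A := Submodule.span F {x : A | ∃ u v : A, x = u * s * v} with hS
  have hgen : ∀ u v : A, u * s * v ∈ S :=
    fun u v => Submodule.subset_span ⟨u, v, rfl⟩
  have hleft : ∀ (r : A) (x : A), x ∈ S → r * x ∈ S := by
    intro r x hx
    have h : S ≤ S.comap (LinearMap.mulLeft F r) := by
      rw [hS, Submodule.span_le]
      rintro _ ⟨u, v, rfl⟩
      have : r * (u * s * v) = (r * u) * s * v := by simp only [mul_assoc]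
      exact Submodule.mem_comap.mpr (by rw [LinearMap.mulLeft_apply, this]; exact hgen (r * u) v)
    exact h hx
  have hright : ∀ (r : A) (x : A), x ∈ S → x * r ∈ S := by
    intro r x hx
    have h : S ≤ S.comap (LinearMap.mulRight F r) := by
      rw [hS, Submodule.span_le]
      rintro _ ⟨u, v, rfl⟩
      have : (u * s * v) * r = u * s * (v * r) := by simp only [mul_assoc]
      exact Submodule.mem_comap.mpr (by rw [LinearMap.mulRight_apply, this]; exact hgen u (v * r))
    exact h hx
  let I : TwoSidedIdeal A := TwoSidedIdeal.mk' S S.zero_mem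
    (fun hx hy => S.add_mem hx hy) (fun hx => S.neg_mem hx)
    (fun {x y} hy => hleft x y hy) (fun {x y} hx => hright y x hx)
  have hmem : ∀ x : A, x ∈ I ↔ x ∈ S := fun x => TwoSidedIdeal.mem_mk' _ _ _ _ _ _ x
  have hsI : s ∈ I := (hmem s).mpr (by simpa using hgen 1 1)
  have htop : I = ⊤ := by
    rcases IsSimpleRing.simple.eq_bot_or_eq_top I with h | h
    · rw [h, TwoSidedIdeal.mem_bot] at hsI; exact absurd hsI hs
    · exact h
  rw [eq_top_iff]
  intro x _
  exact (hmem x).mp (htop ▸ TwoSidedIdeal.mem_top A)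

theorem aux_exists_sandwich (F : Type*) {A : Type*} [Field F] [Ring A] [Algebra F A]
    [Nontrivial A] [IsSimpleRing A] (w : A) (hw : w ≠ 0) :
    ∃ z : A, w * z * w ≠ 0 := by
  by_contra hcon
  push_neg at hcon
  have hspan := aux_span_top F w hw
  have h5 : ∀ y ∈ Submodule.span F {x : A | ∃ u v : A, x = u * w * v},
      ∀ c : A, (w * c) * y = 0 := by
    intro y hy
    induction hy using Submodule.span_induction with
    | mem x hx =>
        obtain ⟨u, v, rfl⟩ := hx
        intro c
        have : w * c * (u * w * v) = (w * (c * u) * w) * v := by simp only [mul_assoc]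
        rw [this, hcon (c * u), zero_mul]
    | zero => intro c; rw [mul_zero]
    | add x y hx hy ihx ihy => intro c; rw [mul_add, ihx c, ihy c, add_zero]
    | smul t x hx ih => intro c; rw [mul_smul_comm, ih c, smul_zero]
  have h1 : (1 : A) ∈ Submodule.span F {x : A | ∃ u v : A, x = u * w * v} := by
    rw [hspan]; trivial
  have h4 : ∀ x ∈ Submodule.span F {x : A | ∃ u v : A, x = u * w * v}, x * 1 = 0 := by
    intro x hx
    induction hx using Submodule.span_induction with
    | mem x hx =>
        obtain ⟨u, v, rfl⟩ := hx
        have h0 := h5 1 h1 v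
        calc u * w * v * 1 = u * ((w * v) * 1) := by simp only [mul_assoc]
        _ = 0 := by rw [h0, mul_zero]
    | zero => rw [zero_mul]
    | add x x' hx hx' ihx ihx' => rw [add_mul, ihx, ihx', add_zero]
    | smul t x hx ih => rw [smul_mul_assoc, ih, smul_zero]
  have := h4 1 h1
  rw [one_mul] at this
  exact one_ne_zero this

theorem aux_isUnit_of_mul_eq_one (F : Type*) {A : Type*} [Field F] [Ring A] [Algebra F A]
    [FiniteDimensional F A] {u z : A} (h : u * z = 1) : IsUnit z := by
  have hinj : Function.Injective (LinearMap.mulLeft F z) := by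
    intro x y hxy
    simp only [LinearMap.mulLeft_apply] at hxy
    have h2 : u * (z * x) = u * (z * y) := by rw [hxy]
    simpa [← mul_assoc, h] using h2
  obtain ⟨v, hv⟩ := (LinearMap.injective_iff_surjective).mp hinj 1
  simp only [LinearMap.mulLeft_apply] at hv
  have huv : u = v := by
    calc u = u * (z * v) := by rw [hv, mul_one]
    _ = (u * z) * v := by rw [mul_assoc]
    _ = v := by rw [h, one_mul]
  exact ⟨⟨z, v, hv, by rw [← huv]; exact h⟩, rfl⟩

theorem aux_exists_idem (F : Type*) {A : Type*} [Field F] [Ring A] [Algebra F A]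
    [FiniteDimensional F A] [Nontrivial A] [IsSimpleRing A]
    {z : A} (hz : z ≠ 0) (hnu : ¬ IsUnit z) : ∃ e : A, e * e = e ∧ e ≠ 0 ∧ e ≠ 1 := by
  classical
  set L₀ : Submodule A A := Submodule.span A {z} with hL₀
  have hzL₀ : z ∈ L₀ := Submodule.mem_span_singleton_self z
  have hL₀ne : L₀ ≠ ⊥ := by
    intro h
    rw [h, Submodule.mem_bot] at hzL₀
    exact hz hzL₀
  have h1L₀ : (1:A) ∉ L₀ := by
    intro h1
    obtain ⟨u, hu⟩ := Submodule.mem_span_singleton.mp h1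
    rw [smul_eq_mul] at hu
    exact hnu (aux_isUnit_of_mul_eq_one F hu)
  set Sdim : Set ℕ :=
    {n | ∃ L : Submodule A A, L ≤ L₀ ∧ L ≠ ⊥ ∧ n = Module.finrank F (L.restrictScalars F)} with hSdim
  have hSne : Sdim.Nonempty := ⟨_, L₀, le_rfl, hL₀ne, rfl⟩
  obtain ⟨L, hLle, hLne, hLrank⟩ := Nat.sInf_mem hSne
  have hmin : ∀ L' : Submodule A A, L' ≤ L → L' ≠ ⊥ → L' = L := by
    intro L' hle hne
    have h1 : sInf Sdim ≤ Module.finrank F (L'.restrictScalars F) :=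
      Nat.sInf_le ⟨L', hle.trans hLle, hne, rfl⟩
    have h2 : (L'.restrictScalars F) ≤ L.restrictScalars F := hle
    have h3 := Submodule.eq_of_le_of_finrank_le h2 (by omega)
    exact Submodule.restrictScalars_injective F A A h3
  obtain ⟨w, hwL, hw0⟩ := Submodule.ne_bot_iff L |>.mp hLne
  obtain ⟨y, hy⟩ := aux_exists_sandwich F w hw0
  set u : A := y * w with hu
  have huL : u ∈ L := by rw [hu, ← smul_eq_mul]; exact L.smul_mem y hwL
  have hwu : w * u ≠ 0 := by rw [hu, ← mul_assoc]; exact hy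
  have hu0 : u ≠ 0 := fun h => hwu (by rw [h, mul_zero])
  set Tu : A →ₗ[A] A := LinearMap.toSpanSingleton A A u with hTu
  have hTua : ∀ x : A, Tu x = x * u := fun x => by
    rw [hTu, LinearMap.toSpanSingleton_apply, smul_eq_mul]
  set Lu : Submodule A A := L.map Tu with hLu
  have hLuL : Lu ≤ L := by
    rintro _ ⟨x, hx, rfl⟩
    rw [hTua, ← smul_eq_mul]
    exact L.smul_mem x huL
  have hLune : Lu ≠ ⊥ := by
    rw [Submodule.ne_bot_iff]
    exact ⟨w * u, ⟨w, hwL, hTua w⟩, hwu⟩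
  have hLuEq : Lu = L := hmin Lu hLuL hLune
  have huLu : u ∈ Lu := hLuEq.symm ▸ huL
  obtain ⟨e, heL, heu⟩ := huLu
  rw [hTua] at heu
  have he0 : e ≠ 0 := by
    intro h
    rw [h, zero_mul] at heu
    exact hu0 heu.symm
  set K : Submodule A A := L ⊓ LinearMap.ker Tu with hK
  have hKbot : K = ⊥ := by
    by_contra h
    have hKL : K = L := hmin K inf_le_left h
    have heK : e ∈ K := hKL.symm ▸ heL
    have : Tu e = 0 := heK.2
    rw [hTua, heu] at this
    exact hu0 this
  have hee : e * e - e ∈ K := by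
    refine Submodule.mem_inf.mpr ⟨L.sub_mem (by rw [← smul_eq_mul]; exact L.smul_mem e heL) heL, ?_⟩
    rw [LinearMap.mem_ker, map_sub, hTua, hTua, mul_assoc, heu, heu, sub_self]
  rw [hKbot, Submodule.mem_bot, sub_eq_zero] at hee
  refine ⟨e, hee, he0, ?_⟩
  intro h
  rw [h] at heL
  exact h1L₀ (hLle heL)

theorem aux_pair {F A : Type*} [Field F] [Ring A] [Algebra F A] [Nontrivial A]
    {x : A} (hx : ∀ c : F, x ≠ c • 1) {s t : F} (h : s • (1:A) + t • x = 0) :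
    s = 0 ∧ t = 0 := by
  by_cases ht : t = 0
  · rw [ht, zero_smul, add_zero] at h
    exact ⟨aux_smul_one_eq_zero h, ht⟩
  · exfalso
    apply hx (-(t⁻¹ * s))
    have h2 : t • x = (-s) • (1:A) := by
      rw [neg_smul, ← neg_eq_of_add_eq_zero_right h]
    calc x = t⁻¹ • (t • x) := by rw [smul_smul, inv_mul_cancel₀ ht, one_smul]
    _ = (-(t⁻¹ * s)) • (1:A) := by rw [h2, smul_smul, mul_neg, neg_mul_eq_mul_neg]

theorem aux_finrank_span_pair {F A : Type*} [Field F] [Ring A] [Algebra F A] [Nontrivial A]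
    {x : A} (hx : ∀ c : F, x ≠ c • 1) :
    Module.finrank F ↥(Submodule.span F {(1:A), x}) = 2 := by
  have hli : LinearIndependent F ![(1:A), x] :=
    LinearIndependent.pair_iff.mpr (fun s t h => aux_pair hx h)
  have hr : Set.range ![(1:A), x] = {1, x} := by
    simp [Matrix.range_cons, Matrix.range_empty, Set.pair_comm]
  have := finrank_span_eq_card hli
  rw [hr] at this
  simpa using this
theorem aux_exists_i (F : Type*) {A : Type*} [Field F] [Ring A] [Algebra F A]
    [FiniteDimensional F A] [Nontrivial A] [Algebra.IsCentral F A] [IsSimpleRing A]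
    (hchar : (2:F) ≠ 0) (hdim : Module.finrank F A = 4) :
    ∃ (i : A) (a : F), a ≠ 0 ∧ i * i = a • 1 ∧ (∀ c : F, i ≠ c • 1) := by
  by_cases hdiv : ∀ z : A, z ≠ 0 → IsUnit z
  · -- "division ring" case
    have hxex : ∃ x : A, ∀ c : F, x ≠ c • 1 := by
      by_contra h
      push_neg at h
      have hle : (⊤ : Submodule F A) ≤ Submodule.span F {(1:A)} := by
        intro v _
        obtain ⟨c, hc⟩ := h v
        exact Submodule.mem_span_singleton.mpr ⟨c, hc.symm⟩
      have h4 : Module.finrank F ↥(⊤ : Submodule F A) ≤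
          Module.finrank F ↥(Submodule.span F {(1:A)}) := Submodule.finrank_mono hle
      rw [finrank_top, hdim, finrank_span_singleton (one_ne_zero : (1:A) ≠ 0)] at h4
      omega
    obtain ⟨x, hx⟩ := hxex
    haveI hNZD : NoZeroDivisors A := by
      constructor
      intro a b hab
      by_contra h
      push_neg at h
      obtain ⟨ha, hb⟩ := h
      obtain ⟨ua, hua⟩ := hdiv a ha
      apply hb
      calc b = (↑ua⁻¹ * a) * b := by rw [← hua, Units.inv_mul, one_mul]
      _ = ↑ua⁻¹ * (a * b) := by rw [mul_assoc]
      _ = 0 := by rw [hab, mul_zero]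
    set K := Algebra.adjoin F ({x} : Set A) with hKdef
    have hxK : x ∈ K := Algebra.self_mem_adjoin_singleton F x
    letI : CommRing ↥K := Algebra.adjoinCommRingOfComm F (by
      rintro a ha b hb
      rw [Set.mem_singleton_iff] at ha hb
      rw [ha, hb])
    haveI : Nontrivial ↥K := ⟨⟨0, 1, by
      intro h
      exact (zero_ne_one (α := A)) (congrArg Subtype.val h)⟩⟩
    have hfield : IsField ↥K := by
      refine ⟨exists_pair_ne _, mul_comm, ?_⟩
      intro a ha
      have hKa : Function.Injective (LinearMap.mulLeft F a : ↥K →ₗ[F] ↥K) := by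
        intro p q hpq
        simp only [LinearMap.mulLeft_apply] at hpq
        have h1 : (a:A) * ((p:A) - (q:A)) = 0 := by
          have h2 := congrArg Subtype.val hpq
          simp only [MulMemClass.coe_mul] at h2
          rw [mul_sub, h2, sub_self]
        have ha' : (a : A) ≠ 0 := fun h => ha (Subtype.ext h)
        rcases mul_eq_zero.mp h1 with h | h
        · exact absurd h ha'
        · exact Subtype.ext (by rwa [sub_eq_zero] at h)
      obtain ⟨b, hb⟩ := (LinearMap.injective_iff_surjective).mp hKa 1
      simp only [LinearMap.mulLeft_apply] at hb
      exact ⟨b, hb⟩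
    letI : Field ↥K := hfield.toField
    have htower := Module.finrank_mul_finrank F ↥K A
    rw [hdim] at htower
    set d := Module.finrank F ↥K with hd
    have hle : Submodule.span F {(1:A), x} ≤ Subalgebra.toSubmodule K := by
      rw [Submodule.span_le]
      rintro y hy
      rcases hy with h | h
      · rw [h]; exact K.one_mem
      · rw [Set.mem_singleton_iff] at h; rw [h]; exact hxK
    have hd2 : 2 ≤ d := by
      have := Submodule.finrank_mono hle
      rw [aux_finrank_span_pair hx, Subalgebra.finrank_toSubmodule] at this
      exact this
    have hdvd : d ∣ 4 := Dvd.intro _ htower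
    have hd4 : d ≤ 4 := Nat.le_of_dvd (by norm_num) hdvd
    have hdcases : d = 2 ∨ d = 4 := by
      by_contra hcon
      push_neg at hcon
      have hd3 : d = 3 := by omega
      rw [hd3] at hdvd
      norm_num at hdvd
    rcases hdcases with hdc | hdc
    · -- d = 2 : x satisfies a quadratic
      have hsp : Submodule.span F {(1:A), x} = Subalgebra.toSubmodule K := by
        refine Submodule.eq_of_le_of_finrank_le hle ?_
        rw [aux_finrank_span_pair hx, Subalgebra.finrank_toSubmodule, ← hd, hdc]
      have hx2K : x * x ∈ Submodule.span F {(1:A), x} := by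
        rw [hsp]
        exact K.mul_mem hxK hxK
      obtain ⟨s, t, hst⟩ := Submodule.mem_span_pair.mp hx2K
      set c : F := (2:F)⁻¹ * t with hc
      have h2c : (2:F) * c = t := by
        rw [hc, ← mul_assoc, mul_inv_cancel₀ hchar, one_mul]
      set i := x - c • (1:A) with hi
      have e1 : x * (c • (1:A)) = c • x := by rw [mul_smul_comm, mul_one]
      have e2 : (c • (1:A)) * x = c • x := by rw [smul_mul_assoc, one_mul]
      have e3 : (c • (1:A)) * (c • (1:A)) = (c*c) • (1:A) := by
        rw [smul_mul_assoc, one_mul, smul_smul]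
      have hii : i * i = (s + c*c) • (1:A) := by
        calc i * i = x*x - c•x - c•x + (c*c)•(1:A) := by
              rw [hi, sub_mul, mul_sub, mul_sub, e1, e2, e3]; abel
        _ = (s•(1:A) + t•x) - c•x - c•x + (c*c)•(1:A) := by rw [hst]
        _ = s•(1:A) + (t - ((2:F)*c))•x + (c*c)•(1:A) := by
              rw [sub_smul, two_mul, add_smul]; abel
        _ = (s + c*c) • (1:A) := by rw [h2c, sub_self, zero_smul, add_zero, add_smul]
      have hins : ∀ e : F, i ≠ e • 1 := by
        intro e he
        apply hx (e + c)
        rw [hi, sub_eq_iff_eq_add] at he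
        rw [he, add_smul]
      have ha : s + c*c ≠ 0 := by
        intro ha0
        rw [ha0, zero_smul] at hii
        have hi0 : i = 0 := by
          rcases mul_eq_zero.mp hii with h | h <;> exact h
        exact hins 0 (by rw [hi0, zero_smul])
      exact ⟨i, s + c*c, ha, hii, hins⟩
    · -- d = 4 : A is commutative, contradiction
      exfalso
      have hKtop : Subalgebra.toSubmodule K = ⊤ := by
        apply Submodule.eq_top_of_finrank_eq
        rw [Subalgebra.finrank_toSubmodule, ← hd, hdc, hdim]
      have hcomm : ∀ z : A, z * x = x * z := by
        intro z
        have hzK : z ∈ K := by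
          have : z ∈ Subalgebra.toSubmodule K := by rw [hKtop]; trivial
          exact this
        induction hzK using Algebra.adjoin_induction with
        | mem y hy => rw [Set.mem_singleton_iff] at hy; rw [hy]
        | algebraMap r => rw [Algebra.algebraMap_eq_smul_one, smul_mul_assoc, one_mul,
            mul_smul_comm, mul_one]
        | add y z hy hz ihy ihz => rw [add_mul, mul_add, ihy, ihz]
        | mul y z hy hz ihy ihz => rw [mul_assoc, ihz, ← mul_assoc, ihy, mul_assoc]
      have hxc : x ∈ Subalgebra.center F A := Subalgebra.mem_center_iff.mpr hcomm
      rw [Algebra.IsCentral.center_eq_bot F A, Algebra.mem_bot] at hxc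
      obtain ⟨c, hc⟩ := hxc
      exact hx c (by rw [← hc, Algebra.algebraMap_eq_smul_one])
  · push_neg at hdiv
    obtain ⟨z, hz0, hznu⟩ := hdiv
    obtain ⟨e, hee, he0, he1⟩ := aux_exists_idem F hz0 hznu
    refine ⟨(2:F) • e - 1, 1, one_ne_zero, ?_, ?_⟩
    · set u := (2:F) • e with hu
      have huu : u * u = u + u := by
        calc u * u = ((2:F)*2) • e := by
              rw [hu, smul_mul_assoc, mul_smul_comm, smul_smul, hee]
        _ = u + u := by rw [hu, ← add_smul]; norm_num
      rw [one_smul]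
      calc (u - 1) * (u - 1) = u*u - u - (u - 1) := by
            rw [sub_mul, mul_sub, mul_sub, mul_one, one_mul, one_mul]
      _ = 1 := by rw [huu]; abel
    · intro c h
      have he : e = ((2:F)⁻¹ * (c+1)) • (1:A) := by
        have h1 : (2:F) • e = (c+1) • (1:A) := by
          rw [add_smul, one_smul, ← h]
          abel
        calc e = (2:F)⁻¹ • ((2:F) • e) := by rw [smul_smul, inv_mul_cancel₀ hchar, one_smul]
        _ = ((2:F)⁻¹ * (c+1)) • (1:A) := by rw [h1, smul_smul]
      set t : F := (2:F)⁻¹ * (c+1) with ht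
      have h3 : (t*t) • (1:A) = t • (1:A) := by
        have h4 := hee
        rw [he, smul_mul_assoc, one_mul, smul_smul] at h4
        exact h4
      have h4 : (t*t - t) • (1:A) = 0 := by rw [sub_smul, h3, sub_self]
      have h5 : t*t - t = 0 := aux_smul_one_eq_zero h4
      have h6 : t * (t - 1) = 0 := by ring_nf; linear_combination h5
      rcases mul_eq_zero.mp h6 with h7 | h7
      · apply he0
        rw [he, h7, zero_smul]
      · apply he1
        rw [he, sub_eq_zero.mp h7, one_smul]

/-- Over a field `F` of characteristic `≠ 2`, every central simple `F`-algebra of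
dimension `4` is a quaternion algebra `ℍ[F, a, b]` with `a`, `b` nonzero. -/
theorem central_simple_dim_four_is_quaternion
    (F A : Type*) [Field F] (hchar : (2 : F) ≠ 0)
    [Ring A] [Algebra F A] [FiniteDimensional F A] [Nontrivial A]
    [Algebra.IsCentral F A] [IsSimpleRing A]
    (hdim : Module.finrank F A = 4) :
    ∃ a b : F, a ≠ 0 ∧ b ≠ 0 ∧ Nonempty (A ≃ₐ[F] ℍ[F, a, b]) := by
  obtain ⟨i, a, ha, hi2, hix⟩ := aux_exists_i F hchar hdim
  -- basic consequences
  have hli : ∀ x : A, i * x = 0 → x = 0 := by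
    intro x hx
    have h1 : a • x = 0 := by
      calc a • x = (a • (1:A)) * x := by rw [smul_mul_assoc, one_mul]
      _ = i * (i * x) := by rw [← hi2, mul_assoc]
      _ = 0 := by rw [hx, mul_zero]
    rcases smul_eq_zero.mp h1 with h | h
    · exact absurd h ha
    · exact h
  have hri : ∀ x : A, x * i = 0 → x = 0 := by
    intro x hx
    have h1 : a • x = 0 := by
      calc a • x = x * (a • (1:A)) := by rw [mul_smul_comm, mul_one]
      _ = (x * i) * i := by rw [← hi2, mul_assoc]
      _ = 0 := by rw [hx, zero_mul]
    rcases smul_eq_zero.mp h1 with h | h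
    · exact absurd h ha
    · exact h
  -- eigenspaces of conjugation by i
  set Ap : Submodule F A := LinearMap.ker (LinearMap.mulLeft F i - LinearMap.mulRight F i) with hAp
  set Am : Submodule F A := LinearMap.ker (LinearMap.mulLeft F i + LinearMap.mulRight F i) with hAm
  have hmemp : ∀ x : A, x ∈ Ap ↔ i * x = x * i := by
    intro x
    rw [hAp, LinearMap.mem_ker, LinearMap.sub_apply, LinearMap.mulLeft_apply,
      LinearMap.mulRight_apply, sub_eq_zero]
  have hmemm : ∀ x : A, x ∈ Am ↔ i * x + x * i = 0 := by
    intro x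
    rw [hAm, LinearMap.mem_ker, LinearMap.add_apply, LinearMap.mulLeft_apply,
      LinearMap.mulRight_apply]
  -- decomposition
  have hdecomp : ∀ x : A, ∃ p ∈ Ap, ∃ m ∈ Am, x = p + m := by
    intro x
    have hixi1 : i * (i * x * i) = a • (x * i) := by
      calc i * (i * x * i) = (i * i) * (x * i) := by simp only [mul_assoc]
      _ = a • (x * i) := by rw [hi2, smul_mul_assoc, one_mul]
    have hixi2 : (i * x * i) * i = a • (i * x) := by
      calc (i * x * i) * i = (i * x) * (i * i) := by simp only [mul_assoc]
      _ = a • (i * x) := by rw [hi2, mul_smul_comm, mul_one]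
    refine ⟨(2:F)⁻¹ • (x + a⁻¹ • (i * x * i)), ?_, (2:F)⁻¹ • (x - a⁻¹ • (i * x * i)), ?_, ?_⟩
    · rw [hmemp]
      rw [mul_smul_comm, smul_mul_assoc, mul_add, add_mul, mul_smul_comm, smul_mul_assoc,
        hixi1, hixi2, smul_smul, smul_smul, inv_mul_cancel₀ ha, one_smul, one_smul]
      rw [add_comm]
    · rw [hmemm]
      rw [mul_smul_comm, smul_mul_assoc, mul_sub, sub_mul, mul_smul_comm, smul_mul_assoc,
        hixi1, hixi2, smul_smul, smul_smul, inv_mul_cancel₀ ha, one_smul, one_smul,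
        ← smul_add]
      have : i * x - x * i + (x * i - i * x) = 0 := by abel
      rw [this, smul_zero]
    · rw [← smul_add]
      have : x + a⁻¹ • (i * x * i) + (x - a⁻¹ • (i * x * i)) = (2:F) • x := by
        rw [two_smul]; abel
      rw [this, smul_smul, inv_mul_cancel₀ hchar, one_smul]
  have hsup : Ap ⊔ Am = ⊤ := by
    rw [eq_top_iff]
    intro x _
    obtain ⟨p, hp, m, hm, hx⟩ := hdecomp x
    rw [hx]
    exact Submodule.add_mem_sup hp hm
  have hinf : Ap ⊓ Am = ⊥ := by
    rw [eq_bot_iff]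
    intro x hx
    obtain ⟨hxp, hxm⟩ := Submodule.mem_inf.mp hx
    rw [hmemp] at hxp
    rw [hmemm] at hxm
    have h1 : ((2:F)) • (i * x) = 0 := by
      rw [two_smul]
      nth_rewrite 2 [hxp]
      exact hxm
    rcases smul_eq_zero.mp h1 with h | h
    · exact absurd h hchar
    · rw [Submodule.mem_bot]
      exact hli x h
  have hrank4 : Module.finrank F ↥Ap + Module.finrank F ↥Am = 4 := by
    have h1 := Submodule.finrank_sup_add_finrank_inf_eq Ap Am
    rw [hsup, hinf, finrank_top, hdim, finrank_bot] at h1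
    omega
  have hle1i : Submodule.span F {(1:A), i} ≤ Ap := by
    rw [Submodule.span_le]
    rintro y hy
    rcases hy with h | h
    · rw [h, SetLike.mem_coe, hmemp, mul_one, one_mul]
    · rw [Set.mem_singleton_iff] at h
      rw [h, SetLike.mem_coe, hmemp]
  have hAmne : Am ≠ ⊥ := by
    intro hbot
    have hexnc : ∃ x : A, i * x ≠ x * i := by
      by_contra h
      push_neg at h
      have hic : i ∈ Subalgebra.center F A := Subalgebra.mem_center_iff.mpr (fun b => (h b).symm)
      rw [Algebra.IsCentral.center_eq_bot F A, Algebra.mem_bot] at hic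
      obtain ⟨c, hc⟩ := hic
      exact hix c (by rw [← hc, Algebra.algebraMap_eq_smul_one])
    obtain ⟨x, hxnc⟩ := hexnc
    obtain ⟨p, hp, m, hm, hx⟩ := hdecomp x
    have hm0 : m = 0 := by
      rw [hbot, Submodule.mem_bot] at hm
      exact hm
    rw [hmemp] at hp
    rw [hx, hm0, add_zero] at hxnc
    exact hxnc hp
  -- rule out finrank Am = 1
  have hAm1 : Module.finrank F ↥Am ≠ 1 := by
    intro h1
    obtain ⟨j, hjm, hj0⟩ := Submodule.ne_bot_iff Am |>.mp hAmne
    have hsp : Submodule.span F {j} = Am := by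
      refine Submodule.eq_of_le_of_finrank_le ?_ ?_
      · rw [Submodule.span_le, Set.singleton_subset_iff]
        exact hjm
      · rw [h1, finrank_span_singleton hj0]
    have hji : j * i = -(i * j) :=
      eq_neg_of_add_eq_zero_right ((hmemm j).mp hjm)
    have hijm : i * j ∈ Am := by
      rw [hmemm]
      calc i * (i * j) + (i * j) * i = (i * i) * j + i * (j * i) := by
            simp only [mul_assoc]
      _ = a • j + i * (-(i * j)) := by rw [hi2, smul_mul_assoc, one_mul, hji]
      _ = a • j - (i * i) * j := by rw [mul_neg, ← mul_assoc]; abel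
      _ = a • j - a • j := by rw [hi2, smul_mul_assoc, one_mul]
      _ = 0 := sub_self _
    rw [← hsp] at hijm
    obtain ⟨c, hc⟩ := Submodule.mem_span_singleton.mp hijm
    -- hc : c • j = i * j
    have hac : a = c * c := by
      have h2 : a • j = (c * c) • j := by
        calc a • j = (i * i) * j := by rw [hi2, smul_mul_assoc, one_mul]
        _ = i * (i * j) := by rw [mul_assoc]
        _ = i * (c • j) := by rw [hc]
        _ = c • (i * j) := by rw [mul_smul_comm]
        _ = c • (c • j) := by rw [hc]
        _ = (c * c) • j := by rw [smul_smul]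
      have h3 : (a - c * c) • j = 0 := by rw [sub_smul, h2, sub_self]
      rcases smul_eq_zero.mp h3 with h | h
      · exact sub_eq_zero.mp h
      · exact absurd h hj0
    have hc0 : c ≠ 0 := by
      intro h
      rw [h, mul_zero] at hac
      exact ha hac
    have h2c0 : (2:F) * c ≠ 0 := mul_ne_zero hchar hc0
    set q : A := c • (1:A) + i with hq
    have hqq : q * q = ((2:F) * c) • q := by
      have e1 : (c • (1:A)) * (c • (1:A)) = (c*c) • (1:A) := by
        rw [smul_mul_assoc, one_mul, smul_smul]
      have e2 : (c • (1:A)) * i = c • i := by rw [smul_mul_assoc, one_mul]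
      have e3 : i * (c • (1:A)) = c • i := by rw [mul_smul_comm, mul_one]
      calc q * q = (c*c) • (1:A) + c • i + (c • i + a • (1:A)) := by
            rw [hq, add_mul, mul_add, mul_add, e1, e2, e3, hi2]
      _ = ((2:F) * c) • q := by
            rw [hq, smul_add, smul_smul, hac]
            match_scalars <;> ring
    set e : A := ((2:F) * c)⁻¹ • q with he
    have hee : e * e = e := by
      rw [he, smul_mul_assoc, mul_smul_comm, smul_smul, hqq, smul_smul]
      rw [mul_assoc, inv_mul_cancel₀ h2c0, mul_one]
    have he0 : e ≠ 0 := by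
      intro h
      rw [he, smul_eq_zero] at h
      rcases h with h | h
      · exact inv_ne_zero h2c0 h
      · apply hix (-c)
        rw [neg_smul, eq_neg_iff_add_eq_zero, add_comm]
        rw [hq] at h
        exact h
    set f : A := 1 - e with hf
    have hqj : q * j = ((2:F) * c) • j := by
      rw [hq, add_mul, smul_mul_assoc, one_mul, ← hc, ← add_smul, two_mul, add_smul]
    have hfj : f * j = 0 := by
      rw [hf, sub_mul, one_mul, he, smul_mul_assoc, hqj, smul_smul,
        inv_mul_cancel₀ h2c0, one_smul, sub_self]
    have hje : j * e = 0 := by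
      have hjq : j * q = 0 := by
        rw [hq, mul_add, mul_smul_comm, mul_one, hji, ← hc, add_neg_cancel]
      rw [he, mul_smul_comm, hjq, smul_zero]
    have hfze : ∀ z : A, (f * z) * e = 0 := by
      intro z
      obtain ⟨p, hp, m, hm, hz⟩ := hdecomp z
      rw [hmemp] at hp
      have hpe : e * p = p * e := by
        have hqp : q * p = p * q := by
          rw [hq, add_mul, mul_add, smul_mul_assoc, one_mul, mul_smul_comm, mul_one, hp]
        rw [he, smul_mul_assoc, mul_smul_comm, hqp]
      have hppart : (f * p) * e = 0 := by
        rw [hf, sub_mul, one_mul, sub_mul, hpe, mul_assoc, hee, sub_self]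
      have hmpart : (f * m) * e = 0 := by
        rw [← hsp] at hm
        obtain ⟨t, ht⟩ := Submodule.mem_span_singleton.mp hm
        calc (f * m) * e = (t • (f * j)) * e := by rw [← ht, mul_smul_comm t f j]
        _ = t • ((f * j) * e) := smul_mul_assoc t (f * j) e
        _ = 0 := by rw [hfj, zero_mul, smul_zero]
      rw [hz, mul_add, add_mul, hppart, hmpart, add_zero]
    have hspan := aux_span_top F e he0
    have hfzero : ∀ x ∈ Submodule.span F {x : A | ∃ u v : A, x = u * e * v}, f * x = 0 := by
      intro x hx
      induction hx using Submodule.span_induction with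
      | mem x hx =>
          obtain ⟨u, v, rfl⟩ := hx
          calc f * (u * e * v) = ((f * u) * e) * v := by
                rw [mul_assoc, ← mul_assoc, ← mul_assoc]
          _ = 0 := by rw [hfze u, zero_mul]
      | zero => rw [mul_zero]
      | add x y hx hy ihx ihy => rw [mul_add, ihx, ihy, add_zero]
      | smul t x hx ih => rw [mul_smul_comm, ih, smul_zero]
    have hf0 : f = 0 := by
      have h1 : (1:A) ∈ Submodule.span F {x : A | ∃ u v : A, x = u * e * v} := by
        rw [hspan]; trivial
      have := hfzero 1 h1
      rwa [mul_one] at this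
    -- f = 0 means e = 1, so i = c • 1, contradiction
    apply hix c
    have he1 : e = 1 := by
      rw [hf, sub_eq_zero] at hf0
      exact hf0.symm
    have hq2c : q = ((2:F) * c) • (1:A) := by
      calc q = ((2:F) * c) • e := by
            rw [he, smul_smul, mul_inv_cancel₀ h2c0, one_smul]
      _ = ((2:F) * c) • (1:A) := by rw [he1]
    have : i = q - c • (1:A) := by rw [hq]; abel
    rw [this, hq2c, ← sub_smul]
    congr 1
    ring
  -- now Ap = span {1, i}
  have hAm2 : 2 ≤ Module.finrank F ↥Am := by
    have h0 : Module.finrank F ↥Am ≠ 0 := by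
      intro h
      exact hAmne (Submodule.finrank_eq_zero.mp h)
    omega
  have hApspan : Submodule.span F {(1:A), i} = Ap := by
    refine Submodule.eq_of_le_of_finrank_le hle1i ?_
    rw [aux_finrank_span_pair hix]
    omega
  -- every element of Am squares to a scalar
  have hsq : ∀ j, j ∈ Am → ∃ b : F, j * j = b • (1:A) := by
    intro j hjm
    by_cases hj0 : j = 0
    · exact ⟨0, by rw [hj0, mul_zero, zero_smul]⟩
    have hji : j * i = -(i * j) := eq_neg_of_add_eq_zero_right ((hmemm j).mp hjm)
    have hij : i * j = -(j * i) := by rw [hji, neg_neg]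
    have hjjp : j * j ∈ Ap := by
      rw [hmemp]
      calc i * (j * j) = (i * j) * j := by rw [mul_assoc]
      _ = (-(j * i)) * j := by rw [hij]
      _ = -(j * (i * j)) := by rw [neg_mul, mul_assoc]
      _ = -(j * (-(j * i))) := by rw [← hij]
      _ = j * (j * i) := by rw [mul_neg, neg_neg]
      _ = (j * j) * i := by rw [mul_assoc]
    rw [← hApspan] at hjjp
    obtain ⟨w, v, hwv⟩ := Submodule.mem_span_pair.mp hjjp
    -- hwv : w • 1 + v • i = j * j
    have hij0 : i * j ≠ 0 := fun h => hj0 (hli j h)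
    have hv : v = 0 := by
      have h2 : j * (j * j) = (j * j) * j := by rw [mul_assoc]
      rw [← hwv] at h2
      rw [mul_add, add_mul, mul_smul_comm, mul_one, smul_mul_assoc, one_mul,
        mul_smul_comm, smul_mul_assoc, hji] at h2
      -- h2 : w • j + v • (-(i*j)) = w • j + v • (i * j)
      have h6 : v • (-(i*j)) = v • (i*j) := add_left_cancel h2
      rw [smul_neg] at h6
      have h3 : ((2:F) * v) • (i * j) = 0 := by
        rw [mul_smul, two_smul]
        nth_rewrite 1 [← h6]
        exact neg_add_cancel _
      rcases smul_eq_zero.mp h3 with h | h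
      · rcases mul_eq_zero.mp h with h' | h'
        · exact absurd h' hchar
        · exact h'
      · exact absurd h hij0
    refine ⟨w, ?_⟩
    rw [← hwv, hv, zero_smul, add_zero]
  -- there is j in Am with nonzero square
  have hgoodj : ∃ j ∈ Am, j ≠ 0 ∧ ∃ b : F, b ≠ 0 ∧ j * j = b • (1:A) := by
    by_contra hbad
    push_neg at hbad
    have hallz : ∀ j ∈ Am, j * j = 0 := by
      intro j hjm
      by_cases hj0 : j = 0
      · rw [hj0, mul_zero]
      obtain ⟨b, hb⟩ := hsq j hjm
      by_cases hb0 : b = 0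
      · rw [hb, hb0, zero_smul]
      · exact absurd hb (hbad j hjm hj0 b hb0)
    obtain ⟨j₁, hj₁m, hj₁0⟩ := Submodule.ne_bot_iff Am |>.mp hAmne
    have hj₁i : j₁ * i = -(i * j₁) := eq_neg_of_add_eq_zero_right ((hmemm j₁).mp hj₁m)
    have hzz : ∀ z : A, j₁ * z * j₁ = 0 := by
      intro z
      obtain ⟨p, hp, m, hm, hz⟩ := hdecomp z
      have hppart : j₁ * p * j₁ = 0 := by
        rw [← hApspan] at hp
        obtain ⟨w, v, hwv⟩ := Submodule.mem_span_pair.mp hp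
        have t1 : (j₁ * i) * j₁ = 0 := by
          rw [hj₁i, neg_mul, mul_assoc, hallz j₁ hj₁m, mul_zero, neg_zero]
        rw [← hwv, mul_add, add_mul, mul_smul_comm, mul_one, smul_mul_assoc,
          hallz j₁ hj₁m, smul_zero, zero_add, mul_smul_comm, smul_mul_assoc, t1, smul_zero]
      have hmpart : j₁ * m * j₁ = 0 := by
        have hsum : (j₁ + m) * (j₁ + m) = 0 := hallz _ (Am.add_mem hj₁m hm)
        rw [add_mul, mul_add, mul_add, hallz j₁ hj₁m, hallz m hm, zero_add, add_zero] at hsum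
        -- hsum : j₁ * m + m * j₁ = 0
        have hmj : m * j₁ = -(j₁ * m) := eq_neg_of_add_eq_zero_right hsum
        rw [mul_assoc, hmj, mul_neg, ← mul_assoc, hallz j₁ hj₁m, zero_mul, neg_zero]
      rw [hz, mul_add, add_mul, hppart, hmpart, add_zero]
    obtain ⟨z, hzne⟩ := aux_exists_sandwich F j₁ hj₁0
    exact hzne (hzz z)
  obtain ⟨j, hjm, hj0, b, hb0, hjj⟩ := hgoodj
  have hji : j * i = -(i * j) := eq_neg_of_add_eq_zero_right ((hmemm j).mp hjm)
  -- build the quaternion basis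
  set B : QuaternionAlgebra.Basis A a 0 b :=
    { i := i, j := j, k := i * j,
      i_mul_i := by rw [hi2, zero_smul, add_zero], j_mul_j := hjj, i_mul_j := rfl,
      j_mul_i := by rw [hji, zero_smul, zero_sub] } with hB
  set φ := B.liftHom with hφ
  -- linear independence of 1, i, j, i*j
  have hind : ∀ w x y z : F, w • (1:A) + x • i + y • j + z • (i*j) = 0 →
      w = 0 ∧ x = 0 ∧ y = 0 ∧ z = 0 := by
    intro w x y z hE
    have c1 : i * (1:A) * i = a • (1:A) := by rw [mul_one, hi2]
    have c2 : i * i * i = a • i := by rw [hi2, smul_mul_assoc, one_mul]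
    have c3 : i * j * i = (-a) • j := by
      calc i * j * i = i * (j * i) := by rw [mul_assoc]
      _ = -(i * (i * j)) := by rw [hji, mul_neg]
      _ = -((i * i) * j) := by rw [mul_assoc]
      _ = (-a) • j := by rw [hi2, smul_mul_assoc, one_mul, neg_smul]
    have c4 : i * (i * j) * i = (-a) • (i * j) := by
      calc i * (i * j) * i = ((i * i) * j) * i := by rw [mul_assoc i i j]
      _ = (a • j) * i := by rw [hi2, smul_mul_assoc, one_mul]
      _ = a • (j * i) := by rw [smul_mul_assoc]
      _ = (-a) • (i * j) := by rw [hji, smul_neg, neg_smul]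
    have h9 : i * (w • (1:A) + x • i + y • j + z • (i*j)) * i
        + a • (w • (1:A) + x • i + y • j + z • (i*j)) = 0 := by
      rw [hE, mul_zero, zero_mul, smul_zero, add_zero]
    have hid : i * (w • (1:A) + x • i + y • j + z • (i*j)) * i
        + a • (w • (1:A) + x • i + y • j + z • (i*j))
        = ((2:F)*(w*a)) • (1:A) + ((2:F)*(x*a)) • i := by
      simp only [mul_add, add_mul, mul_smul_comm, smul_mul_assoc, smul_add, smul_smul]
      rw [c1, c2, c3, c4]
      match_scalars <;> ring
    rw [hid] at h9
    obtain ⟨hw', hx'⟩ := aux_pair hix h9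
    have hw : w = 0 := by
      rcases mul_eq_zero.mp hw' with h | h
      · exact absurd h hchar
      · rcases mul_eq_zero.mp h with h' | h'
        · exact h'
        · exact absurd h' ha
    have hx : x = 0 := by
      rcases mul_eq_zero.mp hx' with h | h
      · exact absurd h hchar
      · rcases mul_eq_zero.mp h with h' | h'
        · exact h'
        · exact absurd h' ha
    rw [hw, hx, zero_smul, zero_smul, add_zero, zero_add] at hE
    -- hE : y • j + z • (i*j) = 0
    have h10 : (y • j + z • (i*j)) * j = 0 := by rw [hE, zero_mul]
    have hid2 : (y • j + z • (i*j)) * j = (y*b) • (1:A) + (z*b) • i := by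
      rw [add_mul, smul_mul_assoc, smul_mul_assoc, hjj, smul_smul, mul_assoc, hjj,
        mul_smul_comm, mul_one, smul_smul]
    rw [hid2] at h10
    obtain ⟨hy', hz'⟩ := aux_pair hix h10
    have hy : y = 0 := by
      rcases mul_eq_zero.mp hy' with h | h
      · exact h
      · exact absurd h hb0
    have hz : z = 0 := by
      rcases mul_eq_zero.mp hz' with h | h
      · exact h
      · exact absurd h hb0
    exact ⟨hw, hx, hy, hz⟩
  have hinj : Function.Injective φ := by
    rw [injective_iff_map_eq_zero]
    intro q hq
    rw [hφ, QuaternionAlgebra.Basis.liftHom_apply] at hq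
    unfold QuaternionAlgebra.Basis.lift at hq
    rw [hB] at hq
    simp only [Algebra.algebraMap_eq_smul_one] at hq
    obtain ⟨h1, h2, h3, h4⟩ := hind q.re q.imI q.imJ q.imK hq
    ext <;> assumption
  haveI : Module.Finite F ℍ[F,a,b] := Module.Finite.of_basis (QuaternionAlgebra.basisOneIJK a 0 b)
  have hfr : Module.finrank F ℍ[F,a,b] = Module.finrank F A := by
    rw [QuaternionAlgebra.finrank_eq_four, hdim]
  have hsurj : Function.Surjective φ :=
    (LinearMap.injective_iff_surjective_of_finrank_eq_finrank hfr (f := φ.toLinearMap)).mp hinj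
  exact ⟨a, b, ha, hb0, ⟨(AlgEquiv.ofBijective φ ⟨hinj, hsurj⟩).symm⟩⟩
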